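/- Let K be a commutative ring, X a set, L the free Lie algebra over K on X, and S a subset of X. Let 𝔰 be the Lie ideal of L generated by the generators indexed by X − S. Then 𝔰 is itself a free Lie algebra over K, freely generated by the iterated brackets ad(ξ_{s₁})∘ad(ξ_{s₂})∘⋯∘ad(ξ_{s_k})(ξ_x) = [ξ_{s₁},[ξ_{s₂},…,[ξ_{s_k}, ξ_x]…]], indexed by pairs (w, x) where w = (s₁,…,s_k) ranges over all finite words in S (including the empty word, giving ξ_x itself) and x ranges over X − S. Precisely: the canonical Lie algebra homomorphism from the free Lie algebra over K on the index type (List S) × (X − S) to L, sending (w, x) to the iterated bracket above, is injective with image exactly the underlying Lie subalgebra of 𝔰 (so it induces a Lie algebra isomorphism onto 𝔰). -/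

import Mathlib

open LieSubmodule

namespace FreeLieElim

/-! ### Semidirect product of a Lie algebra with a module (abelian ideal) -/

section TSDP

variable (K : Type*) [CommRing K] (g M : Type*) [LieRing g] [LieAlgebra K g]
  [AddCommGroup M] [Module K M] [LieRingModule g M] [LieModule K g M]

/-- Semidirect product of a Lie algebra with an (abelian) module. -/
def TSDP := g × M

namespace TSDP

variable {K g M}

instance : AddCommGroup (TSDP g M) := inferInstanceAs (AddCommGroup (g × M))
instance : Module K (TSDP g M) := inferInstanceAs (Module K (g × M))

@[simp] lemma add_fst (x y : TSDP g M) : (x + y).1 = x.1 + y.1 := rfl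
@[simp] lemma add_snd (x y : TSDP g M) : (x + y).2 = x.2 + y.2 := rfl
@[simp] lemma smul_fst (t : K) (x : TSDP g M) : (t • x).1 = t • x.1 := rfl
@[simp] lemma smul_snd (t : K) (x : TSDP g M) : (t • x).2 = t • x.2 := rfl

instance : LieRing (TSDP g M) where
  bracket x y := (⁅x.1, y.1⁆, ⁅x.1, y.2⁆ - ⁅y.1, x.2⁆)
  add_lie x y z := by
    show (_, _) = (@HAdd.hAdd (g × M) (g × M) (g × M) (@instHAdd (g × M) (inferInstance : Add (g × M))) (_, _) (_, _))
    apply Prod.ext <;> simp <;> abel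
  lie_add x y z := by
    show (_, _) = (@HAdd.hAdd (g × M) (g × M) (g × M) (@instHAdd (g × M) (inferInstance : Add (g × M))) (_, _) (_, _))
    apply Prod.ext <;> simp <;> abel
  lie_self x := by
    show (_, _) = (0 : g × M)
    apply Prod.ext <;> simp
  leibniz_lie x y z := by
    show (_, _) = (@HAdd.hAdd (g × M) (g × M) (g × M) (@instHAdd (g × M) (inferInstance : Add (g × M))) (_, _) (_, _))
    apply Prod.ext <;> simp [lie_lie, lie_sub] <;> abel

instance : LieAlgebra K (TSDP g M) where
  lie_smul t x y := by
    show (_, _) = (@HSMul.hSMul K (g × M) (g × M) (@instHSMul K (g × M) (inferInstance : SMul K (g × M))) t (_, _))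
    apply Prod.ext <;> simp [smul_sub]

@[simp] lemma lie_fst (x y : TSDP g M) : (⁅x, y⁆ : TSDP g M).1 = ⁅x.1, y.1⁆ := rfl
@[simp] lemma lie_snd (x y : TSDP g M) : (⁅x, y⁆ : TSDP g M).2 = ⁅x.1, y.2⁆ - ⁅y.1, x.2⁆ := rfl

variable (K g M) in
/-- first projection as Lie algebra hom -/
def fstHom : TSDP g M →ₗ⁅K⁆ g where
  toFun x := x.1
  map_add' _ _ := rfl
  map_smul' _ _ := rfl
  map_lie' := rfl

@[simp] lemma fstHom_apply (x : TSDP g M) : (fstHom K g M x) = x.1 := rfl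

end TSDP

end TSDP

/-! ### Derivations of a free Lie algebra prescribed on generators -/

section FreeDer

variable (K : Type*) [CommRing K] {X : Type*}

open FreeLieAlgebra

/-- Auxiliary map used to build a derivation of the free Lie algebra. -/
noncomputable def derLift (f : X → FreeLieAlgebra K X) :
    FreeLieAlgebra K X →ₗ⁅K⁆ TSDP (FreeLieAlgebra K X) (FreeLieAlgebra K X) :=
  lift K fun x => (show TSDP _ _ from (of K x, f x))

lemma derLift_fst (f : X → FreeLieAlgebra K X) (z : FreeLieAlgebra K X) :
    (derLift K f z).1 = z := by
  have h : (TSDP.fstHom K (FreeLieAlgebra K X) (FreeLieAlgebra K X)).comp (derLift K f)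
      = LieHom.id := by
    apply hom_ext
    intro x
    simp [derLift]
    exact congrArg Prod.fst (lift_of_apply (fun x => (show TSDP (FreeLieAlgebra K X) (FreeLieAlgebra K X) from (of K x, f x))) x)
  have h2 := DFunLike.congr_fun h z
  simpa using h2

/-- The derivation of the free Lie algebra sending the generators by `f`. -/
noncomputable def freeDer (f : X → FreeLieAlgebra K X) :
    LieDerivation K (FreeLieAlgebra K X) (FreeLieAlgebra K X) where
  toFun z := (derLift K f z).2
  map_add' z w := by
    show ((derLift K f) (z + w)).2 = ((derLift K f) z).2 + ((derLift K f) w).2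
    rw [map_add, TSDP.add_snd]
  map_smul' t z := by
    show ((derLift K f) (t • z)).2 = t • ((derLift K f) z).2
    rw [map_smul, TSDP.smul_snd]
  leibniz' a b := by
    show (derLift K f ⁅a, b⁆).2
        = ⁅a, (derLift K f b).2⁆ - ⁅b, (derLift K f a).2⁆
    rw [LieHom.map_lie, TSDP.lie_snd, derLift_fst, derLift_fst]

@[simp] lemma freeDer_of (f : X → FreeLieAlgebra K X) (x : X) :
    freeDer K f (of K x) = f x := by
  show (derLift K f (of K x)).2 = f x
  rw [derLift, lift_of_apply]

end FreeDer

/-! ### Semidirect product of two Lie algebras along an action by derivations -/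

section SDP

variable {K : Type*} [CommRing K] {g m : Type*} [LieRing g] [LieAlgebra K g]
  [LieRing m] [LieAlgebra K m]

/-- Semidirect product of Lie algebras along `α`. -/
def SDP (_α : g →ₗ⁅K⁆ LieDerivation K m m) := g × m

attribute [reducible] SDP

namespace SDP

variable (α : g →ₗ⁅K⁆ LieDerivation K m m)

instance : AddCommGroup (SDP α) := inferInstanceAs (AddCommGroup (g × m))
instance : Module K (SDP α) := inferInstanceAs (Module K (g × m))

@[simp] lemma add_fst (x y : SDP α) : (x + y).1 = x.1 + y.1 := rfl
@[simp] lemma add_snd (x y : SDP α) : (x + y).2 = x.2 + y.2 := rfl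
@[simp] lemma smul_fst (t : K) (x : SDP α) : (t • x).1 = t • x.1 := rfl
@[simp] lemma smul_snd (t : K) (x : SDP α) : (t • x).2 = t • x.2 := rfl

instance : LieRing (SDP α) where
  bracket x y := (⁅x.1, y.1⁆, α x.1 y.2 - α y.1 x.2 + ⁅x.2, y.2⁆)
  add_lie x y z := by
    show (_, _) = ((_, _) + (_, _) : g × m)
    apply Prod.ext <;> simp <;> abel
  lie_add x y z := by
    show (_, _) = ((_, _) + (_, _) : g × m)
    apply Prod.ext <;> simp <;> abel
  lie_self x := by
    show (_, _) = (0 : g × m)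
    apply Prod.ext <;> simp
  leibniz_lie x y z := by
    show (_, _) = ((_, _) + (_, _) : g × m)
    apply Prod.ext
    · simp
    · simp only [map_add, map_sub, LieHom.map_lie, LieDerivation.lie_apply,
        lie_add, lie_sub, add_lie, sub_lie, lie_lie, map_add, map_sub,
        LieDerivation.apply_lie_eq_sub, Prod.mk_add_mk]
      rw [← lie_skew ((α x.1) y.2) z.2, ← lie_skew ((α y.1) x.2) z.2]
      abel

instance : LieAlgebra K (SDP α) where
  lie_smul t x y := by
    show (_, _) = (t • (_, _) : g × m)
    apply Prod.ext <;> simp [smul_sub, smul_add]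

@[simp] lemma lie_fst (x y : SDP α) : (⁅x, y⁆ : SDP α).1 = ⁅x.1, y.1⁆ := rfl
@[simp] lemma lie_snd (x y : SDP α) :
    (⁅x, y⁆ : SDP α).2 = α x.1 y.2 - α y.1 x.2 + ⁅x.2, y.2⁆ := rfl

/-- inclusion of the second factor -/
def inr : m →ₗ⁅K⁆ SDP α where
  toFun z := ((0, z) : g × m)
  map_add' z w := by apply Prod.ext <;> simp
  map_smul' t z := by apply Prod.ext <;> simp
  map_lie' {z w} := by
    apply Prod.ext
    · show (0 : g) = ⁅(0 : g), (0 : g)⁆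
      simp
    · show ⁅z, w⁆ = α 0 w - α 0 z + ⁅z, w⁆
      simp

@[simp] lemma inr_apply (z : m) : inr α z = ((0, z) : g × m) := rfl

end SDP

end SDP

/-! ### Graph homomorphisms -/

section Graph

variable {K : Type*} [CommRing K] {B L' : Type*} [LieRing B] [LieAlgebra K B]
  [LieRing L'] [LieAlgebra K L']

/-- Graph of `φ ∘ D` as a map into the semidirect product. -/
def graphD (φ : B →ₗ⁅K⁆ L') (D : LieDerivation K B B) : B →ₗ⁅K⁆ TSDP L' L' where
  toFun z := ((φ z, φ (D z)) : L' × L')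
  map_add' z w := by apply Prod.ext <;> simp <;> rfl
  map_smul' t z := by apply Prod.ext <;> simp <;> rfl
  map_lie' {z w} := by
    apply Prod.ext
    · simp; rfl
    · show φ (D ⁅z, w⁆) = ⁅φ z, φ (D w)⁆ - ⁅φ w, φ (D z)⁆
      rw [LieDerivation.apply_lie_eq_sub, map_sub φ, LieHom.map_lie, LieHom.map_lie]

/-- Graph of `ad y ∘ φ` as a map into the semidirect product. -/
def graphAd (φ : B →ₗ⁅K⁆ L') (y : L') : B →ₗ⁅K⁆ TSDP L' L' where
  toFun z := ((φ z, ⁅y, φ z⁆) : L' × L')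
  map_add' z w := by apply Prod.ext <;> simp <;> rfl
  map_smul' t z := by apply Prod.ext <;> simp <;> rfl
  map_lie' {z w} := by
    apply Prod.ext
    · simp; rfl
    · show ⁅y, φ ⁅z, w⁆⁆ = ⁅φ z, ⁅y, φ w⁆⁆ - ⁅φ w, ⁅y, φ z⁆⁆
      rw [LieHom.map_lie, leibniz_lie, ← lie_skew ⁅y, φ z⁆ (φ w)]
      abel

end Graph

/-! ### A Lie subalgebra of a free Lie algebra containing the generators is everything -/

section EqTop

variable (K : Type*) [CommRing K] {X : Type*}

open FreeLieAlgebra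

lemma mem_of_forall_of (H : LieSubalgebra K (FreeLieAlgebra K X))
    (h : ∀ x, of K x ∈ H) (z : FreeLieAlgebra K X) : z ∈ H := by
  let g : FreeLieAlgebra K X →ₗ⁅K⁆ H := lift K fun x => (⟨of K x, h x⟩ : H)
  have hc : H.incl.comp g = LieHom.id := by
    apply hom_ext
    intro x
    simp [g]
  have h2 := DFunLike.congr_fun hc z
  simp only [LieHom.comp_apply, LieHom.id_apply] at h2
  rw [← h2]
  exact (g z).2

end EqTop

/-! ### The elimination setup -/

section Elim

variable (K : Type*) [CommRing K] {X : Type*} (S : Set X)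

open FreeLieAlgebra

/-- The derivation of the free Lie algebra on `(List S) × Sᶜ` prepending `s`. -/
noncomputable def Dmap (s : ↥S) :
    LieDerivation K (FreeLieAlgebra K ((List ↥S) × ↥(Sᶜ)))
      (FreeLieAlgebra K ((List ↥S) × ↥(Sᶜ))) :=
  freeDer K fun p => of K ((s :: p.1, p.2) : (List ↥S) × ↥(Sᶜ))

@[simp] lemma Dmap_of (s : ↥S) (p : (List ↥S) × ↥(Sᶜ)) :
    Dmap K S s (of K p) = of K ((s :: p.1, p.2) : (List ↥S) × ↥(Sᶜ)) :=
  freeDer_of K _ p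

/-- The canonical map from the free Lie algebra on `(List S) × Sᶜ`. -/
noncomputable def phi : FreeLieAlgebra K ((List ↥S) × ↥(Sᶜ)) →ₗ⁅K⁆ FreeLieAlgebra K X :=
  lift K (fun p : (List ↥S) × ↥(Sᶜ) =>
    p.1.foldr (fun s b => ⁅of K (s : X), b⁆) (of K (p.2 : X)))

lemma phi_of (p : (List ↥S) × ↥(Sᶜ)) :
    phi K S (of K p) = p.1.foldr (fun s b => ⁅of K (s : X), b⁆) (of K (p.2 : X)) :=
  lift_of_apply _ p

lemma key (s : ↥S) (z : FreeLieAlgebra K ((List ↥S) × ↥(Sᶜ))) :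
    phi K S (Dmap K S s z) = ⁅of K (s : X), phi K S z⁆ := by
  have h : graphD (phi K S) (Dmap K S s) = graphAd (phi K S) (of K (s : X)) := by
    apply hom_ext
    intro p
    show ((phi K S (of K p), phi K S (Dmap K S s (of K p)))
        : FreeLieAlgebra K X × FreeLieAlgebra K X)
      = (phi K S (of K p), ⁅of K (s : X), phi K S (of K p)⁆)
    congr 1
    rw [Dmap_of, phi_of, phi_of]
    rfl
  have h2 := DFunLike.congr_fun h z
  exact congrArg (fun q : FreeLieAlgebra K X × FreeLieAlgebra K X => q.2) h2

/-- Action of the free Lie algebra on `S` by derivations. -/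
noncomputable def alpha : FreeLieAlgebra K ↥S →ₗ⁅K⁆
    LieDerivation K (FreeLieAlgebra K ((List ↥S) × ↥(Sᶜ)))
      (FreeLieAlgebra K ((List ↥S) × ↥(Sᶜ))) :=
  lift K (Dmap K S)

@[simp] lemma alpha_of (s : ↥S) : alpha K S (of K s) = Dmap K S s :=
  lift_of_apply _ s

open Classical in
/-- generator images for the retraction -/
noncomputable def rhoGen (x : X) : SDP (alpha K S) :=
  if h : x ∈ S then (show SDP (alpha K S) from (of K (⟨x, h⟩ : ↥S), 0))
  else (show SDP (alpha K S) from
    (0, of K ((([] : List ↥S), ⟨x, h⟩) : (List ↥S) × ↥(Sᶜ))))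

/-- The retraction onto the semidirect product. -/
noncomputable def rho : FreeLieAlgebra K X →ₗ⁅K⁆ SDP (alpha K S) :=
  lift K (rhoGen K S)

lemma rho_of (x : X) : rho K S (of K x) = rhoGen K S x := lift_of_apply _ x

lemma rhoGen_compl (x : ↥(Sᶜ)) :
    rhoGen K S ↑x = (show SDP (alpha K S) from
      (0, of K ((([] : List ↥S), x) : (List ↥S) × ↥(Sᶜ)))) := by
  have hx : ¬ (x : X) ∈ S := x.2
  simp only [rhoGen]
  rw [dif_neg hx]

lemma rhoGen_mem (s : ↥S) :
    rhoGen K S ↑s = (show SDP (alpha K S) from (of K s, 0)) := by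
  have hs : (s : X) ∈ S := s.2
  simp only [rhoGen]
  rw [dif_pos hs]

lemma rho_beta (w : List ↥S) (x : ↥(Sᶜ)) :
    rho K S (w.foldr (fun s b => ⁅of K (s : X), b⁆) (of K (x : X)))
      = (show SDP (alpha K S) from (0, of K ((w, x) : (List ↥S) × ↥(Sᶜ)))) := by
  induction w with
  | nil =>
    show rho K S (of K (x : X)) = _
    rw [rho_of, rhoGen_compl]
  | cons s w ih =>
    show rho K S ⁅of K (s : X),
      w.foldr (fun s b => ⁅of K (s : X), b⁆) (of K (x : X))⁆ = _
    rw [LieHom.map_lie, ih, rho_of, rhoGen_mem]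
    apply Prod.ext
    · show ⁅of K s, (0 : FreeLieAlgebra K ↥S)⁆ = 0
      simp
    · show alpha K S (of K s) (of K ((w, x) : (List ↥S) × ↥(Sᶜ)))
          - alpha K S 0 0 + ⁅(0 : FreeLieAlgebra K ((List ↥S) × ↥(Sᶜ))), _⁆
        = of K ((s :: w, x) : (List ↥S) × ↥(Sᶜ))
      rw [alpha_of, Dmap_of, map_zero]
      simp

lemma phi_injective : Function.Injective (phi K S) := by
  have h : (rho K S).comp (phi K S) = SDP.inr (alpha K S) := by
    apply hom_ext
    intro p
    rw [LieHom.comp_apply, phi_of]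
    exact rho_beta K S p.1 p.2
  intro z w hzw
  have h1 := DFunLike.congr_fun h z
  have h2 := DFunLike.congr_fun h w
  simp only [LieHom.comp_apply] at h1 h2
  rw [hzw] at h1
  have h3 := h1.symm.trans h2
  have h4 := congrArg (fun q : FreeLieAlgebra K ↥S ×
    FreeLieAlgebra K ((List ↥S) × ↥(Sᶜ)) => q.2) h3
  simpa using h4

lemma range_phi : Set.range (phi K S)
    = ((lieSpan K (FreeLieAlgebra K X) (of K '' Sᶜ) : LieIdeal K (FreeLieAlgebra K X))
        : Set (FreeLieAlgebra K X)) := by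
  have hβ : ∀ (w : List ↥S) (x : ↥(Sᶜ)),
      (w.foldr (fun s b => ⁅of K (s : X), b⁆) (of K (x : X)))
        ∈ lieSpan K (FreeLieAlgebra K X) (of K '' Sᶜ) := by
    intro w x
    induction w with
    | nil => exact subset_lieSpan ⟨↑x, x.2, rfl⟩
    | cons s w ih => exact (lieSpan K (FreeLieAlgebra K X) (of K '' Sᶜ)).lie_mem ih
  apply Set.Subset.antisymm
  · rintro _ ⟨z, rfl⟩
    let H : LieSubalgebra K (FreeLieAlgebra K ((List ↥S) × ↥(Sᶜ))) :=
      { toSubmodule := Submodule.comap (phi K S).toLinearMap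
          (lieSpan K (FreeLieAlgebra K X) (of K '' Sᶜ) : Submodule K (FreeLieAlgebra K X))
        lie_mem' := fun {a b} ha hb => by
          show phi K S ⁅a, b⁆ ∈ lieSpan K (FreeLieAlgebra K X) (of K '' Sᶜ)
          rw [LieHom.map_lie]
          exact (lieSpan K (FreeLieAlgebra K X) (of K '' Sᶜ)).lie_mem hb }
    have hgen : ∀ p, of K p ∈ H := by
      intro p
      show phi K S (of K p) ∈ lieSpan K (FreeLieAlgebra K X) (of K '' Sᶜ)
      rw [phi_of]
      exact hβ p.1 p.2
    exact mem_of_forall_of K H hgen z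
  · have hstab : ∀ y : FreeLieAlgebra K X,
        ∀ z, ⁅y, phi K S z⁆ ∈ LinearMap.range (phi K S).toLinearMap := by
      intro y
      let Hs : LieSubalgebra K (FreeLieAlgebra K X) :=
        { carrier := {y | ∀ z, ⁅y, phi K S z⁆ ∈ LinearMap.range (phi K S).toLinearMap}
          add_mem' := fun {a b} ha hb z => by
            rw [add_lie]
            exact Submodule.add_mem _ (ha z) (hb z)
          zero_mem' := fun z => by
            rw [zero_lie]
            exact Submodule.zero_mem _
          smul_mem' := fun t a ha z => by
            rw [smul_lie]
            exact Submodule.smul_mem _ t (ha z)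
          lie_mem' := fun {a b} ha hb z => by
            rw [lie_lie]
            obtain ⟨u, hu⟩ := hb z
            obtain ⟨v, hv⟩ := ha z
            rw [← hu, ← hv]
            exact Submodule.sub_mem _ (ha u) (hb v) }
      have hgen : ∀ x, of K x ∈ Hs := by
        intro x z
        by_cases hx : x ∈ S
        · exact ⟨Dmap K S ⟨x, hx⟩ z, key K S ⟨x, hx⟩ z⟩
        · have hofx : of K x = phi K S (of K ((([] : List ↥S), ⟨x, hx⟩)
              : (List ↥S) × ↥(Sᶜ))) := by
            rw [phi_of]
            rfl
          rw [hofx, ← LieHom.map_lie]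
          exact ⟨_, rfl⟩
      exact fun z => mem_of_forall_of K Hs hgen y z
    intro l hl
    have hle : lieSpan K (FreeLieAlgebra K X) (of K '' Sᶜ)
        ≤ ({ toSubmodule := LinearMap.range (phi K S).toLinearMap
             lie_mem := fun {y} {m} hm => by
               obtain ⟨z, rfl⟩ := hm
               exact hstab y z } : LieIdeal K (FreeLieAlgebra K X)) := by
      apply lieSpan_le.mpr
      rintro _ ⟨x, hx, rfl⟩
      refine ⟨of K ((([] : List ↥S), ⟨x, hx⟩) : (List ↥S) × ↥(Sᶜ)), ?_⟩
      show phi K S (of K ((([] : List ↥S), ⟨x, hx⟩) : (List ↥S) × ↥(Sᶜ))) = of K x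
      rw [phi_of]
      rfl
    obtain ⟨z, hz⟩ := hle hl
    exact ⟨z, hz⟩

end Elim

end FreeLieElim

/-- **The Elimination Theorem.** Let `K` be a commutative ring, `X` a set, `L` the free Lie
algebra over `K` on `X` and `S ⊆ X`. Let `𝔰` be the Lie ideal of `L` generated by the
generators indexed by `X − S`. Then the canonical Lie algebra homomorphism from the free Lie
algebra on `(List S) × (X − S)` to `L`, sending `((s₁,…,s_k), x)` to the iterated bracket
`[ξ_{s₁},[ξ_{s₂},…,[ξ_{s_k}, ξ_x]…]]`, is injective with image exactly the underlying
Lie subalgebra of `𝔰`; in particular `𝔰` is a free Lie algebra on these elements. -/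
theorem free_lie_elimination (K : Type*) [CommRing K] (X : Type*) (S : Set X)
    (𝔰 : LieIdeal K (FreeLieAlgebra K X))
    (h𝔰 : 𝔰 = lieSpan K (FreeLieAlgebra K X) (FreeLieAlgebra.of K '' Sᶜ))
    (φ : FreeLieAlgebra K ((List ↥S) × ↥(Sᶜ)) →ₗ⁅K⁆ FreeLieAlgebra K X)
    (hφ : φ = FreeLieAlgebra.lift K (fun p : (List ↥S) × ↥(Sᶜ) =>
      p.1.foldr (fun s b => ⁅FreeLieAlgebra.of K (s : X), b⁆)
        (FreeLieAlgebra.of K (p.2 : X)))) :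
    Function.Injective φ ∧ Set.range φ = (𝔰 : Set (FreeLieAlgebra K X)) := by
  subst hφ
  subst h𝔰
  exact ⟨FreeLieElim.phi_injective K S, FreeLieElim.range_phi K S⟩
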